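/- Let K ⊆ ℝ^n be a convex body with 0 in its interior, and let 0 < λ < 1 and x ∈ ℝ^n be such that K ∩ (x−K) has nonempty interior. Then the fractional covering number satisfies N_ω(K, λK) ≤ ((1+λ)/λ)^n · |K| / |K ∩ (x−K)|. -/

import Mathlib

open MeasureTheory Pointwise ENNReal NNReal

/-- The fractional covering number of `K` by translates of `T`. -/
noncomputable def fracCover {n : ℕ} (K T : Set (EuclideanSpace ℝ (Fin n))) : ℝ≥0∞ :=
  sInf {w : ℝ≥0∞ | ∃ S : Finset ((EuclideanSpace ℝ (Fin n)) × ℝ≥0),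
    (∀ p ∈ S, (0 : ℝ≥0) < p.2) ∧
    (∀ x ∈ K, (1 : ℝ) ≤ ∑ p ∈ S, (p.2 : ℝ) * (p.1 +ᵥ T).indicator 1 x) ∧
    w = ∑ p ∈ S, (p.2 : ℝ≥0∞)}

namespace FracCoverAux

open Metric Set Filter

variable {n : ℕ}

lemma abs_coord_le (v : EuclideanSpace ℝ (Fin n)) (i : Fin n) : |v i| ≤ ‖v‖ := by
  rw [EuclideanSpace.norm_eq]
  have h1 : |v i| = Real.sqrt (‖v i‖ ^ 2) := by
    rw [Real.sqrt_sq_eq_abs, abs_norm, Real.norm_eq_abs]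
  rw [h1]
  apply Real.sqrt_le_sqrt
  exact Finset.single_le_sum (f := fun j => ‖v j‖ ^ 2) (fun j _ => by positivity)
    (Finset.mem_univ i)

/-- Monotonicity of the fractional covering number: if `T₁` is contained in a translate of `T₂`,
then covering by translates of `T₂` is at most as expensive as covering by translates of `T₁`. -/
lemma fracCover_mono {K T₁ T₂ : Set (EuclideanSpace ℝ (Fin n))} (v : EuclideanSpace ℝ (Fin n))
    (h : T₁ ⊆ v +ᵥ T₂) : fracCover K T₂ ≤ fracCover K T₁ := by
  classical
  apply sInf_le_sInf
  rintro w ⟨S, hpos, hcov, rfl⟩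
  have hinj : Function.Injective
      (fun p : (EuclideanSpace ℝ (Fin n)) × ℝ≥0 => (p.1 + v, p.2)) := by
    intro p q hpq
    simp only [Prod.mk.injEq] at hpq
    exact Prod.ext (add_right_cancel hpq.1) hpq.2
  refine ⟨S.image (fun p => (p.1 + v, p.2)), ?_, ?_, ?_⟩
  · intro p hp
    obtain ⟨q, hq, rfl⟩ := Finset.mem_image.1 hp
    exact hpos q hq
  · intro y hy
    refine le_trans (hcov y hy) ?_
    rw [Finset.sum_image (fun a _ b _ hab => hinj hab)]
    apply Finset.sum_le_sum
    intro p _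
    have hsub : (p.1 +ᵥ T₁) ⊆ ((p.1 + v) +ᵥ T₂) := by
      intro a ha
      rw [Set.mem_vadd_set_iff_neg_vadd_mem] at ha ⊢
      have h2 := h ha
      rw [Set.mem_vadd_set_iff_neg_vadd_mem] at h2
      convert h2 using 1
      simp only [vadd_eq_add]
      abel
    exact mul_le_mul_of_nonneg_left
      (Set.indicator_le_indicator_of_subset hsub (fun _ => zero_le_one) y) p.2.2
  · rw [Finset.sum_image (fun a _ b _ hab => hinj hab)]

/-- The core volume bound for fractional coverings, obtained by a grid construction. -/
lemma cover_volume_bound (K T : Set (EuclideanSpace ℝ (Fin n)))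
    (hK : IsCompact K) (hT : IsCompact T) (hT0 : 0 < volume T) (ε : ℝ) (hε : 0 < ε) :
    fracCover K (T + closedBall 0 (ε * Real.sqrt n))
      ≤ volume (cthickening (2 * (ε * Real.sqrt n)) (K - T)) / volume T := by
  classical
  set r := ε * Real.sqrt n with hrdef
  have hr0 : 0 ≤ r := mul_nonneg hε.le (Real.sqrt_nonneg _)
  have hTfin : volume T ≠ ⊤ := hT.measure_lt_top.ne
  set τ := (volume T).toReal with hτdef
  have hτ0 : 0 < τ := ENNReal.toReal_pos hT0.ne' hTfin
  -- the grid
  set pt : (Fin n → ℤ) → EuclideanSpace ℝ (Fin n) :=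
    fun z => (EuclideanSpace.equiv (Fin n) ℝ).symm (fun i => ε * (z i : ℝ)) with hptdef
  have hpt_apply : ∀ z i, pt z i = ε * (z i : ℝ) := fun z i => rfl
  set cube : (Fin n → ℤ) → Set (EuclideanSpace ℝ (Fin n)) :=
    fun z => {w : EuclideanSpace ℝ (Fin n) |
      ∀ i, w i ∈ Set.Ico (ε * (z i : ℝ)) (ε * (z i : ℝ) + ε)} with hcubedef
  set zv : EuclideanSpace ℝ (Fin n) → (Fin n → ℤ) := fun w i => ⌊w i / ε⌋ with hzvdef
  have mem_cube_self : ∀ w, w ∈ cube (zv w) := by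
    intro w i
    constructor
    · calc ε * (⌊w i / ε⌋ : ℝ) ≤ ε * (w i / ε) :=
            mul_le_mul_of_nonneg_left (Int.floor_le _) hε.le
        _ = w i := by field_simp
    · have h1 : w i / ε < ⌊w i / ε⌋ + 1 := Int.lt_floor_add_one _
      have := mul_lt_mul_of_pos_left h1 hε
      calc w i = ε * (w i / ε) := by field_simp
        _ < ε * ((⌊w i / ε⌋ : ℝ) + 1) := this
        _ = ε * (⌊w i / ε⌋ : ℝ) + ε := by ring
  have cube_eq : ∀ w z, w ∈ cube z → zv w = z := by
    intro w z h
    funext i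
    have hi := h i
    apply Int.floor_eq_iff.2
    constructor
    · rw [le_div_iff₀ hε]
      linarith [hi.1]
    · rw [div_lt_iff₀ hε]
      push_cast
      linarith [hi.2]
  have cube_pre : ∀ z, cube z = (MeasurableEquiv.toLp 2 (Fin n → ℝ)).symm ⁻¹'
      (Set.univ.pi fun i => Set.Ico (ε * (z i : ℝ)) (ε * (z i : ℝ) + ε)) := by
    intro z
    ext w
    simp only [hcubedef, Set.mem_setOf_eq, Set.mem_preimage, Set.mem_pi, Set.mem_univ,
      forall_true_left]
    rfl
  have cube_meas : ∀ z, MeasurableSet (cube z) := by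
    intro z
    rw [cube_pre]
    exact (MeasurableEquiv.toLp 2 (Fin n → ℝ)).symm.measurable
      (MeasurableSet.univ_pi fun i => measurableSet_Ico)
  have cube_vol : ∀ z, volume (cube z) = ENNReal.ofReal (ε ^ n) := by
    intro z
    rw [cube_pre]
    rw [(EuclideanSpace.volume_preserving_symm_measurableEquiv_toLp (Fin n)).measure_preimage
      (MeasurableSet.univ_pi fun i => measurableSet_Ico).nullMeasurableSet]
    rw [volume_pi_pi]
    simp only [Real.volume_Ico, add_sub_cancel_left]
    rw [Finset.prod_const, Finset.card_univ, Fintype.card_fin, ENNReal.ofReal_pow hε.le]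
  have cube_norm : ∀ z w, w ∈ cube z → ‖w - pt z‖ ≤ r := by
    intro z w hw
    rw [EuclideanSpace.norm_eq]
    have hterm : ∀ i, ‖(w - pt z) i‖ ^ 2 ≤ ε ^ 2 := by
      intro i
      have hi := hw i
      have hsub : (w - pt z) i = w i - ε * (z i : ℝ) := by
        simp [hpt_apply]
      rw [hsub, Real.norm_eq_abs, sq_abs]
      nlinarith [hi.1, hi.2]
    calc Real.sqrt (∑ i, ‖(w - pt z) i‖ ^ 2)
        ≤ Real.sqrt (∑ _i : Fin n, ε ^ 2) :=
          Real.sqrt_le_sqrt (Finset.sum_le_sum fun i _ => hterm i)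
      _ = r := by
          rw [Finset.sum_const, Finset.card_univ, Fintype.card_fin, nsmul_eq_mul,
            Real.sqrt_mul (by positivity), Real.sqrt_sq hε.le, hrdef]
          ring
  -- the finite index set
  have hKT : IsCompact (K - T) := by
    rw [sub_eq_add_neg]
    exact hK.add hT.neg
  have hDb : Bornology.IsBounded (cthickening r (K - T)) := hKT.isBounded.cthickening
  obtain ⟨R, hR⟩ := hDb.subset_closedBall 0
  have hfin : {z : Fin n → ℤ | pt z ∈ cthickening r (K - T)}.Finite := by
    apply Set.Finite.subset (s := {z : Fin n → ℤ | ∀ i, z i ∈ Set.Icc ⌈-R / ε⌉ ⌊R / ε⌋})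
    · have : {z : Fin n → ℤ | ∀ i, z i ∈ Set.Icc ⌈-R / ε⌉ ⌊R / ε⌋}
          = Set.pi Set.univ (fun _ => Set.Icc ⌈-R / ε⌉ ⌊R / ε⌋) := by
        ext z
        simp only [Set.mem_setOf_eq, Set.mem_univ_pi, Set.mem_Icc]
      rw [this]
      exact Set.Finite.pi fun i => Set.finite_Icc _ _
    · intro z hz i
      have h2 : ‖pt z‖ ≤ R := by
        have := hR hz
        rwa [mem_closedBall, dist_zero_right] at this
      have h1 : |ε * (z i : ℝ)| ≤ R := by
        rw [← hpt_apply]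
        exact (abs_coord_le _ i).trans h2
      rw [abs_le] at h1
      constructor
      · apply Int.ceil_le.2
        rw [div_le_iff₀ hε]
        linarith [h1.1]
      · apply Int.le_floor.2
        rw [le_div_iff₀ hε]
        linarith [h1.2]
  set J := hfin.toFinset with hJdef
  set w : ℝ≥0 := Real.toNNReal (ε ^ n / τ) with hwdef
  have hwcoe : (w : ℝ) = ε ^ n / τ := Real.coe_toNNReal _ (by positivity)
  have hw0 : 0 < w := by
    rw [← NNReal.coe_pos, hwcoe]
    positivity
  have hptinj : Function.Injective pt := by
    intro z z' hzz
    funext i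
    have h1 : ε * (z i : ℝ) = ε * (z' i : ℝ) := by
      rw [← hpt_apply z i, ← hpt_apply z' i, hzz]
    exact_mod_cast mul_left_cancel₀ hε.ne' h1
  set S := J.image (fun z => (pt z, w)) with hSdef
  have hSinj : ∀ a ∈ J, ∀ b ∈ J, (pt a, w) = (pt b, w) → a = b :=
    fun a _ b _ hab => hptinj (congrArg Prod.fst hab)
  set T' := T + closedBall (0 : EuclideanSpace ℝ (Fin n)) r with hT'def
  -- the covering property
  have hcov : ∀ x ∈ K, (1 : ℝ) ≤ ∑ p ∈ S, (p.2 : ℝ) * (p.1 +ᵥ T').indicator 1 x := by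
    intro x hx
    set A := x +ᵥ (-T) with hAdef
    have hAvol : volume A = volume T := by
      rw [hAdef, measure_vadd, Measure.measure_neg]
    set Z := J.filter (fun z => x ∈ pt z +ᵥ T') with hZdef
    have key : ∀ v ∈ A, zv v ∈ Z ∧ v ∈ cube (zv v) := by
      intro v hv
      rw [hAdef, Set.mem_vadd_set_iff_neg_vadd_mem, Set.mem_neg, vadd_eq_add, neg_add_rev,
        neg_neg] at hv
      -- hv : -v + x ∈ T
      have ht : x - v ∈ T := by
        rwa [show -v + x = x - v from by abel] at hv
      have hc := mem_cube_self v
      have hvKT : v ∈ K - T := by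
        exact ⟨x, hx, x - v, ht, sub_sub_cancel x v⟩
      have h1 : pt (zv v) ∈ cthickening r (K - T) := by
        apply mem_cthickening_of_dist_le (pt (zv v)) v r _ hvKT
        rw [dist_eq_norm, ← norm_neg]
        have : -(pt (zv v) - v) = v - pt (zv v) := by abel
        rw [this]
        exact cube_norm _ _ hc
      have h2 : x ∈ pt (zv v) +ᵥ T' := by
        rw [Set.mem_vadd_set_iff_neg_vadd_mem]
        refine ⟨x - v, ht, v - pt (zv v), ?_, ?_⟩
        · rw [mem_closedBall, dist_zero_right]
          exact cube_norm _ _ hc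
        · simp only [vadd_eq_add]
          abel
      refine ⟨?_, hc⟩
      rw [hZdef, Finset.mem_filter]
      exact ⟨by rw [hJdef, Set.Finite.mem_toFinset]; exact h1, h2⟩
    have hcover : A ⊆ ⋃ z ∈ Z, cube z := fun v hv =>
      Set.mem_biUnion (key v hv).1 (key v hv).2
    have hvT : volume T ≤ (Z.card : ℝ≥0∞) * ENNReal.ofReal (ε ^ n) := by
      calc volume T = volume A := hAvol.symm
        _ ≤ ∑ z ∈ Z, volume (cube z) :=
            (measure_mono hcover).trans (measure_biUnion_finset_le _ _)
        _ = (Z.card : ℝ≥0∞) * ENNReal.ofReal (ε ^ n) := by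
            rw [Finset.sum_congr rfl (fun z _ => cube_vol z), Finset.sum_const, nsmul_eq_mul]
    have hcard : τ ≤ (Z.card : ℝ) * ε ^ n := by
      have hne : (Z.card : ℝ≥0∞) * ENNReal.ofReal (ε ^ n) ≠ ⊤ :=
        ENNReal.mul_ne_top (ENNReal.natCast_ne_top _) ENNReal.ofReal_ne_top
      have := ENNReal.toReal_mono hne hvT
      rwa [ENNReal.toReal_mul, ENNReal.toReal_natCast,
        ENNReal.toReal_ofReal (by positivity)] at this
    rw [hSdef, Finset.sum_image hSinj]
    have hredux : ∑ z ∈ J, (((pt z, w).2 : ℝ) * (((pt z, w).1 +ᵥ T').indicator 1 x))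
        = ∑ z ∈ J, ((w : ℝ) * ((pt z +ᵥ T').indicator 1 x)) := rfl
    rw [hredux]
    have hstep : ∑ z ∈ Z, (w : ℝ) * (pt z +ᵥ T').indicator 1 x
        ≤ ∑ z ∈ J, (w : ℝ) * (pt z +ᵥ T').indicator 1 x := by
      apply Finset.sum_le_sum_of_subset_of_nonneg (Finset.filter_subset _ _)
      intro z _ _
      apply mul_nonneg (by positivity)
      exact Set.indicator_nonneg (fun _ _ => zero_le_one) x
    refine le_trans ?_ hstep
    have hone : ∀ z ∈ Z, (w : ℝ) * (pt z +ᵥ T').indicator 1 x = (w : ℝ) := by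
      intro z hz
      rw [hZdef, Finset.mem_filter] at hz
      rw [Set.indicator_of_mem hz.2, Pi.one_apply, mul_one]
    rw [Finset.sum_congr rfl hone, Finset.sum_const, nsmul_eq_mul, hwcoe]
    rw [mul_div_assoc']
    rw [le_div_iff₀ hτ0, one_mul]
    exact hcard
  -- conclude
  have hpos' : ∀ p ∈ S, (0 : ℝ≥0) < p.2 := by
    intro p hp
    obtain ⟨z, _, rfl⟩ := Finset.mem_image.1 hp
    exact hw0
  have hle : fracCover K T' ≤ ∑ p ∈ S, (p.2 : ℝ≥0∞) := by
    unfold fracCover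
    exact sInf_le ⟨S, hpos', hcov, rfl⟩
  refine hle.trans ?_
  -- total weight bound
  have hdisj : (↑J : Set (Fin n → ℤ)).PairwiseDisjoint cube := by
    intro z _ z' _ hzz'
    refine Set.disjoint_left.2 fun v hv hv' => hzz' ?_
    rw [← cube_eq v z hv, ← cube_eq v z' hv']
  have hvol : (J.card : ℝ≥0∞) * ENNReal.ofReal (ε ^ n)
      ≤ volume (cthickening (2 * r) (K - T)) := by
    have h1 : volume (⋃ z ∈ J, cube z) = ∑ z ∈ J, volume (cube z) :=
      measure_biUnion_finset hdisj (fun z _ => cube_meas z)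
    have h2 : (⋃ z ∈ J, cube z) ⊆ cthickening (2 * r) (K - T) := by
      rw [two_mul]
      refine Set.Subset.trans ?_ (cthickening_cthickening_subset hr0 hr0 _)
      intro v hv
      obtain ⟨z, hzJ, hvz⟩ := Set.mem_iUnion₂.1 hv
      have hzD : pt z ∈ cthickening r (K - T) := (Set.Finite.mem_toFinset hfin).1 hzJ
      apply mem_cthickening_of_dist_le v (pt z) r _ hzD
      rw [dist_eq_norm]
      exact cube_norm _ _ hvz
    calc (J.card : ℝ≥0∞) * ENNReal.ofReal (ε ^ n)
        = ∑ z ∈ J, volume (cube z) := by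
          rw [Finset.sum_congr rfl (fun z _ => cube_vol z), Finset.sum_const, nsmul_eq_mul]
      _ = volume (⋃ z ∈ J, cube z) := h1.symm
      _ ≤ volume (cthickening (2 * r) (K - T)) := measure_mono h2
  have hwE : (w : ℝ≥0∞) = ENNReal.ofReal (ε ^ n) / volume T := by
    have h1 : (w : ℝ≥0∞) = ENNReal.ofReal (ε ^ n / τ) := rfl
    rw [h1, ENNReal.ofReal_div_of_pos hτ0, hτdef, ENNReal.ofReal_toReal hTfin]
  have hsum2 : ∑ p ∈ S, (p.2 : ℝ≥0∞) = (J.card : ℝ≥0∞) * (w : ℝ≥0∞) := by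
    rw [hSdef, Finset.sum_image hSinj]
    have hredux2 : ∑ z ∈ J, (((pt z, w).2 : ℝ≥0∞)) = ∑ _z ∈ J, (w : ℝ≥0∞) := rfl
    rw [hredux2, Finset.sum_const, nsmul_eq_mul]
  rw [hsum2, hwE, ← mul_div_assoc]
  exact ENNReal.div_le_div_right hvol _

end FracCoverAux

/-- `N_ω(K, λK) ≤ ((1+λ)/λ)^n |K| / |K ∩ (x − K)|`. -/
theorem fracCover_smul_bound
    (n : ℕ) (K : Set (EuclideanSpace ℝ (Fin n)))
    (hKcomp : IsCompact K) (hKconv : Convex ℝ K) (h0K : 0 ∈ interior K)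
    (lam : ℝ) (hlam0 : 0 < lam) (hlam1 : lam < 1)
    (x : EuclideanSpace ℝ (Fin n))
    (hx : (interior (K ∩ ((fun k => x - k) '' K))).Nonempty) :
    fracCover K (lam • K)
      ≤ ENNReal.ofReal (((1 + lam) / lam) ^ n) * volume K
          / volume (K ∩ ((fun k => x - k) '' K)) := by
  classical
  open Metric Set Filter FracCoverAux in
  set Q := K ∩ ((fun k => x - k) '' K) with hQdef
  have hQK : Q ⊆ K := Set.inter_subset_left
  have himg : (fun k => x - k) '' K = x +ᵥ (-K) := by
    ext v
    simp only [Set.mem_image, Set.mem_vadd_set_iff_neg_vadd_mem, Set.mem_neg, vadd_eq_add]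
    constructor
    · rintro ⟨k, hk, rfl⟩
      convert hk using 1
      abel
    · intro hv
      refine ⟨-(-x + v), hv, ?_⟩
      abel
  have himgcomp : IsCompact ((fun k => x - k) '' K) :=
    hKcomp.image (continuous_const.sub continuous_id)
  have hQcomp : IsCompact Q :=
    IsCompact.of_isClosed_subset hKcomp (hKcomp.isClosed.inter himgcomp.isClosed)
      Set.inter_subset_left
  have hQconv : Convex ℝ Q := by
    apply hKconv.inter
    rw [himg]
    exact (hKconv.neg).vadd x
  have hQsymm : ∀ q ∈ Q, x - q ∈ Q := by
    rintro q ⟨hqK, k, hk, hkq⟩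
    have hkq' : x - k = q := hkq
    constructor
    · rw [← hkq', sub_sub_cancel x k]
      exact hk
    · exact ⟨q, hqK, rfl⟩
  have hQvol0 : 0 < volume Q := Measure.measure_pos_of_nonempty_interior volume hx
  have hQfin : volume Q ≠ ⊤ := hQcomp.measure_lt_top.ne
  have hKfin : volume K ≠ ⊤ := hKcomp.measure_lt_top.ne
  obtain ⟨q₀, ρ, hρ0, hball⟩ : ∃ q₀ ρ, 0 < ρ ∧ Metric.closedBall q₀ ρ ⊆ Q := by
    obtain ⟨q₀, hq₀⟩ := hx
    obtain ⟨ρ', hρ', hsub⟩ := Metric.isOpen_iff.1 isOpen_interior q₀ hq₀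
    exact ⟨q₀, ρ' / 2, by linarith, (Metric.closedBall_subset_ball (by linarith)).trans
      (hsub.trans interior_subset)⟩
  have hfinrank : Module.finrank ℝ (EuclideanSpace ℝ (Fin n)) = n := by
    simp [finrank_euclideanSpace]
  -- Step 1 : for every `μ` strictly between `0` and `lam`, a covering bound via `μ • Q`.
  have step1 : ∀ μ ∈ Set.Ioo (0 : ℝ) lam,
      fracCover K (lam • K)
        ≤ ENNReal.ofReal (((1 + μ) / μ) ^ n) * volume K / volume Q := by
    rintro μ ⟨hμ0, hμlam⟩
    set T := μ • Q with hTdef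
    have hTcomp : IsCompact T := hQcomp.smul μ
    have hTvol : volume T = ENNReal.ofReal (μ ^ n) * volume Q := by
      rw [hTdef, Measure.addHaar_smul_of_nonneg volume hμ0.le, hfinrank]
    have hT0 : 0 < volume T := by
      rw [hTvol]
      exact ENNReal.mul_pos (ENNReal.ofReal_pos.2 (pow_pos hμ0 n)).ne' hQvol0.ne'
    set c := lam - μ with hcdef
    have hc0 : 0 < c := by rw [hcdef]; linarith
    set s := c * ρ with hsdef
    have hs0 : 0 < s := mul_pos hc0 hρ0
    set C := K - T with hCdef
    have hCcomp : IsCompact C := by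
      rw [hCdef, sub_eq_add_neg]
      exact hKcomp.add hTcomp.neg
    -- the eventual inequality in the thickening radius δ
    have hev : ∀ᶠ δ in nhdsWithin (0 : ℝ) (Set.Ioi 0),
        fracCover K (lam • K) ≤ volume (Metric.cthickening δ C) / volume T := by
      filter_upwards [Ioo_mem_nhdsGT_of_mem
        (Set.mem_Ico.2 ⟨le_refl (0 : ℝ), by positivity⟩ : (0:ℝ) ∈ Set.Ico (0:ℝ) (2 * s))]
        with δ hδ
      obtain ⟨hδ0, hδ2s⟩ := hδ
      set ε := δ / (2 * (Real.sqrt n + 1)) with hεdef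
      have hsqrt0 : (0 : ℝ) ≤ Real.sqrt n := Real.sqrt_nonneg _
      have hε0 : 0 < ε := by
        rw [hεdef]
        positivity
      have hrs : ε * Real.sqrt n ≤ s := by
        rw [hεdef]
        rw [div_mul_eq_mul_div, div_le_iff₀ (by positivity)]
        have h1 : δ * Real.sqrt n ≤ δ * (Real.sqrt n + 1) := by nlinarith
        calc δ * Real.sqrt n ≤ δ * (Real.sqrt n + 1) := h1
          _ ≤ (2 * s) * (Real.sqrt n + 1) := by nlinarith
          _ = s * (2 * (Real.sqrt n + 1)) := by ring
      have h2r : 2 * (ε * Real.sqrt n) ≤ δ := by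
        rw [hεdef]
        rw [div_mul_eq_mul_div, ← mul_div_assoc, div_le_iff₀ (by positivity)]
        nlinarith
      have hA := cover_volume_bound K T hKcomp hTcomp hT0 ε hε0
      -- T + closedBall 0 (ε√n) is included in a translate of lam • K
      have hT' : T + Metric.closedBall 0 (ε * Real.sqrt n) ⊆ (-(c • q₀)) +ᵥ (lam • K) := by
        rintro v ⟨t, ht, b, hb, rfl⟩
        rw [Metric.mem_closedBall, dist_zero_right] at hb
        have hb' : ‖b‖ ≤ s := hb.trans hrs
        have hq : q₀ + c⁻¹ • b ∈ Q := by
          apply hball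
          rw [Metric.mem_closedBall, dist_eq_norm, add_sub_cancel_left, norm_smul,
            norm_inv, Real.norm_eq_abs, abs_of_pos hc0]
          rw [inv_mul_le_iff₀ hc0]
          exact hb'.trans_eq hsdef
        obtain ⟨q, hqQ, rfl⟩ := ht
        rw [Set.mem_vadd_set_iff_neg_vadd_mem]
        have h1 : μ • q + c • (q₀ + c⁻¹ • b) ∈ μ • Q + c • Q :=
          Set.add_mem_add (Set.smul_mem_smul_set hqQ) (Set.smul_mem_smul_set hq)
        have h2 : μ • Q + c • Q = lam • Q := by
          rw [← hQconv.add_smul hμ0.le hc0.le]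
          congr 1
          rw [hcdef]; ring
        rw [h2] at h1
        have h3 : μ • q + c • (q₀ + c⁻¹ • b) ∈ lam • K := Set.smul_set_mono hQK h1
        have heq : -(-(c • q₀)) +ᵥ (μ • q + b) = μ • q + c • (q₀ + c⁻¹ • b) := by
          rw [vadd_eq_add, neg_neg, smul_add, smul_inv_smul₀ hc0.ne']
          abel
        rw [heq]
        exact h3
      refine le_trans (fracCover_mono _ hT') (hA.trans ?_)
      exact ENNReal.div_le_div_right
        (measure_mono (Metric.cthickening_mono h2r _)) _
    -- pass to the limit δ → 0
    have hlim : Filter.Tendsto (fun δ => volume (Metric.cthickening δ C) / volume T)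
        (nhdsWithin (0 : ℝ) (Set.Ioi 0)) (nhds (volume C / volume T)) :=
      ENNReal.Tendsto.div_const ((tendsto_measure_cthickening_of_isCompact hCcomp).mono_left
        nhdsWithin_le_nhds) (Or.inr hT0.ne')
    have hfc : fracCover K (lam • K) ≤ volume C / volume T := ge_of_tendsto hlim hev
    -- volume bound for C
    have hCsub : C ⊆ (-(μ • x)) +ᵥ ((1 + μ) • K) := by
      rintro v ⟨k, hk, t, ht, rfl⟩
      obtain ⟨q, hq, rfl⟩ := ht
      rw [Set.mem_vadd_set_iff_neg_vadd_mem]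
      have h1 : k + μ • (x - q) ∈ K + μ • K :=
        Set.add_mem_add hk (Set.smul_mem_smul_set (hQK (hQsymm q hq)))
      have h2 : K + μ • K = (1 + μ) • K := by
        rw [hKconv.add_smul zero_le_one hμ0.le, one_smul]
      rw [h2] at h1
      have heq : -(-(μ • x)) +ᵥ (k - μ • q) = k + μ • (x - q) := by
        rw [vadd_eq_add, neg_neg, smul_sub]
        abel
      rw [heq]
      exact h1
    have hCvol : volume C ≤ ENNReal.ofReal ((1 + μ) ^ n) * volume K := by
      refine (measure_mono hCsub).trans ?_
      rw [measure_vadd, Measure.addHaar_smul_of_nonneg volume (by linarith), hfinrank]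
    refine hfc.trans ?_
    rw [hTvol]
    have halg : ENNReal.ofReal ((1 + μ) ^ n) * volume K / (ENNReal.ofReal (μ ^ n) * volume Q)
        = ENNReal.ofReal (((1 + μ) / μ) ^ n) * volume K / volume Q := by
      rw [div_pow, ENNReal.ofReal_div_of_pos (pow_pos hμ0 n)]
      rw [div_eq_mul_inv, div_eq_mul_inv, div_eq_mul_inv,
        ENNReal.mul_inv (Or.inl (ENNReal.ofReal_pos.2 (pow_pos hμ0 n)).ne') (Or.inl ENNReal.ofReal_ne_top)]
      ring
    rw [← halg]
    exact ENNReal.div_le_div_right hCvol _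
  -- Step 2 : let μ → lam from the left
  have hlim2 : Filter.Tendsto
      (fun μ : ℝ => ENNReal.ofReal (((1 + μ) / μ) ^ n) * volume K / volume Q)
      (nhdsWithin lam (Set.Iio lam))
      (nhds (ENNReal.ofReal (((1 + lam) / lam) ^ n) * volume K / volume Q)) := by
    apply ENNReal.Tendsto.div_const
    · apply ENNReal.Tendsto.mul_const _ (Or.inr hKfin)
      apply (ENNReal.continuous_ofReal.tendsto _).comp
      apply Filter.Tendsto.mono_left _ nhdsWithin_le_nhds
      exact (((continuousAt_const.add continuousAt_id).div continuousAt_id hlam0.ne').pow n)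
    · exact Or.inr hQvol0.ne'
  refine ge_of_tendsto hlim2 ?_
  filter_upwards [Ioo_mem_nhdsLT_of_mem (Set.mem_Ioc.2 ⟨hlam0, le_refl lam⟩)] with μ hμ
  exact step1 μ hμ
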